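/- arXiv:1702.00482 — 2 statements merged into one kernel-verified Lean document; each statement's English description precedes it below -/
import Mathlib

section
/- Let X be a real-valued random variable with mean μ and variance σ², and let δ ∈ (0,1). Partition an i.i.d. sample X_1,...,X_N into k = ⌈8 log(1/δ)⌉ blocks of equal size, compute the sample mean within each block, and let μ̂ be the median of these block means. Then with probability at least 1 − δ, |μ̂ − μ| ≤ 8σ sqrt(log(2/δ)/N). -/
open MeasureTheory ProbabilityTheory

set_option maxHeartbeats 2000000



lemma iIndepFun_ae_congr {Ω ι : Type*} [MeasurableSpace Ω] {P : Measure Ω}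
    {β : ι → Type*} {m : ∀ i, MeasurableSpace (β i)} {f g : ∀ i, Ω → β i}
    (h : iIndepFun f P) (h' : ∀ i, f i =ᵐ[P] g i) : iIndepFun g P := by
  rw [iIndepFun_iff_measure_inter_preimage_eq_mul] at h ⊢
  intro S sets hsets
  have key : ∀ i : ι, ∀ A : Set (β i), (f i ⁻¹' A : Set Ω) =ᵐ[P] (g i ⁻¹' A) := by
    intro i A
    filter_upwards [h' i] with ω hω
    show (f i ω ∈ A) = (g i ω ∈ A)
    rw [hω]
  have hall : ∀ᵐ ω ∂P, ∀ i ∈ S, f i ω = g i ω :=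
    (Filter.eventually_all_finset S).2 fun i _ => h' i
  have h1 : P (⋂ i ∈ S, g i ⁻¹' sets i) = P (⋂ i ∈ S, f i ⁻¹' sets i) := by
    apply measure_congr
    filter_upwards [hall] with ω hω
    show (ω ∈ ⋂ i ∈ S, g i ⁻¹' sets i) = (ω ∈ ⋂ i ∈ S, f i ⁻¹' sets i)
    simp only [Set.mem_iInter, Set.mem_preimage, eq_iff_iff]
    exact ⟨fun H i hi => by rw [hω i hi]; exact H i hi,
           fun H i hi => by rw [← hω i hi]; exact H i hi⟩
  rw [h1, h S hsets]
  exact Finset.prod_congr rfl fun i _ => measure_congr (key i (sets i))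


lemma iIndepFun_blocks {Ω ι κ : Type*} [Fintype κ] [MeasurableSpace Ω] {P : Measure Ω}
    {Y : ι × κ → Ω → ℝ} (hY : ∀ p, Measurable (Y p))
    (h : iIndepFun Y P) :
    iIndepFun
      (fun j ω i => Y (j, i) ω) P := by
  classical
  set V : ι → Ω → (κ → ℝ) := fun j ω i => Y (j, i) ω with hV
  have hVmeas : ∀ j, Measurable (V j) := fun j => measurable_pi_iff.2 fun i => hY (j, i)
  rw [iIndepFun_iff_iIndep]
  set πβ : Set (Set (κ → ℝ)) :=
    Set.pi Set.univ '' Set.pi Set.univ (fun _ : κ => { s : Set ℝ | MeasurableSet s }) with hπβ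
  set π : ι → Set (Set Ω) := fun j => { s | ∃ t ∈ πβ, V j ⁻¹' t = s } with hπ
  have hgen : ∀ j : ι, (inferInstance : MeasurableSpace (κ → ℝ)).comap (V j)
      = MeasurableSpace.generateFrom (π j) := by
    intro j
    conv_lhs => rw [show (inferInstance : MeasurableSpace (κ → ℝ)) = MeasurableSpace.pi from rfl,
      ← generateFrom_pi]
    rw [MeasurableSpace.comap_generateFrom]
    congr 1
  refine iIndepSets.iIndep (fun j => (hVmeas j).comap_le) π
    (fun j => IsPiSystem.comap isPiSystem_pi _) hgen ?_
  rw [iIndepSets_iff]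
  intro S s hs
  have hboxes : ∀ j ∈ S, ∃ t : κ → Set ℝ, (∀ i, MeasurableSet (t i)) ∧
      V j ⁻¹' Set.pi Set.univ t = s j := by
    intro j hj
    obtain ⟨t0, ⟨u, hu, rfl⟩, hts⟩ := hs j hj
    exact ⟨u, fun i => hu i (Set.mem_univ i), hts⟩
  choose! t ht hts using hboxes
  set sets : ι × κ → Set ℝ := fun p => if p.1 ∈ S then t p.1 p.2 else Set.univ with hsetsdef
  have hsets_meas : ∀ p : ι × κ, MeasurableSet (sets p) := by
    intro p
    by_cases hp : p.1 ∈ S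
    · simpa [hsetsdef, hp] using ht p.1 hp p.2
    · simp [hsetsdef, hp]
  have hblock : ∀ j ∈ S, s j = ⋂ i : κ, Y (j, i) ⁻¹' sets (j, i) := by
    intro j hj
    rw [← hts j hj]
    ext ω
    simp [hsetsdef, hj, Set.mem_pi, hV]
  have hL : (⋂ p ∈ S ×ˢ (Finset.univ : Finset κ), Y p ⁻¹' sets p) = ⋂ j ∈ S, s j := by
    ext ω
    simp only [Set.mem_iInter, Finset.mem_product, Finset.mem_univ, and_true, Set.mem_preimage]
    constructor
    · intro H j hj
      rw [hblock j hj]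
      exact Set.mem_iInter.2 fun i => H (j, i) hj
    · intro H p hp
      have h2 := H p.1 hp
      rw [hblock p.1 hp] at h2
      exact Set.mem_iInter.1 h2 p.2
  have hsingle : ∀ j ∈ S, P (s j) = ∏ i : κ, P (Y (j, i) ⁻¹' sets (j, i)) := by
    intro j hj
    have h2 := h.measure_inter_preimage_eq_mul (({j} : Finset ι) ×ˢ Finset.univ)
      (sets := sets) (fun p _ => hsets_meas p)
    have hL2 : (⋂ p ∈ ({j} : Finset ι) ×ˢ (Finset.univ : Finset κ), Y p ⁻¹' sets p)
        = s j := by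
      ext ω
      simp only [Set.mem_iInter, Finset.mem_product, Finset.mem_univ, and_true,
        Finset.mem_singleton, Set.mem_preimage]
      rw [hblock j hj]
      constructor
      · intro H
        exact Set.mem_iInter.2 fun i => H (j, i) rfl
      · rintro H ⟨a, b⟩ rfl
        exact Set.mem_iInter.1 H b
    rw [hL2] at h2
    rw [h2, Finset.prod_product]
    simp
  have happ := h.measure_inter_preimage_eq_mul (S ×ˢ (Finset.univ : Finset κ))
      (sets := sets) (fun p _ => hsets_meas p)
  rw [hL] at happ
  rw [happ, Finset.prod_product]
  exact (Finset.prod_congr rfl fun j hj => (hsingle j hj).symm)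


/-- One-dimensional median-of-means: with `k = ⌈8 log(1/δ)⌉` blocks of size `m = N/k`,
the median `μ̂` of the block means `Z j` satisfies, with probability at least `1 − δ`,
`|μ̂ − μ| ≤ 8σ √(log(2/δ)/N)`. -/
theorem median_of_means_real
    {Ω : Type*} [MeasurableSpace Ω] (P : Measure Ω) [IsProbabilityMeasure P]
    (δ : ℝ) (hδ : δ ∈ Set.Ioo (0 : ℝ) 1)
    (k m N : ℕ) (hk : k = ⌈8 * Real.log (1 / δ)⌉₊) (hm : 0 < m) (hN : N = k * m)
    (X : Fin k × Fin m → Ω → ℝ)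
    (hindep : iIndepFun X P)
    (hident : ∀ i j, IdentDistrib (X i) (X j) P P)
    (hL2 : ∀ i, MemLp (X i) 2 P)
    (μ σ : ℝ) (hσ : 0 ≤ σ)
    (hμ : ∀ i, μ = ∫ ω, X i ω ∂P)
    (hvar : ∀ i, σ ^ 2 = ∫ ω, (X i ω - μ) ^ 2 ∂P)
    (Z : Fin k → Ω → ℝ) (hZ : ∀ j ω, Z j ω = (m : ℝ)⁻¹ * ∑ i : Fin m, X (j, i) ω)
    (muhat : Ω → ℝ) (hmeas : Measurable muhat)
    (hmed : ∀ ω, 2 * (Finset.univ.filter fun j : Fin k => Z j ω ≤ muhat ω).card ≥ k ∧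
                 2 * (Finset.univ.filter fun j : Fin k => muhat ω ≤ Z j ω).card ≥ k) :
    P {ω | |muhat ω - μ| ≤ 8 * σ * Real.sqrt (Real.log (2 / δ) / N)}
      ≥ ENNReal.ofReal (1 - δ) := by
  classical
  obtain ⟨hδ0, hδ1⟩ := hδ
  -- basic numerics
  set L0 : ℝ := Real.log (1 / δ) with hL0def
  have hL0pos : 0 < L0 := Real.log_pos (by rw [lt_div_iff₀ hδ0]; linarith)
  set L : ℝ := Real.log (2 / δ) with hLdef
  have hlog2 : (0.6931471803 : ℝ) < Real.log 2 := Real.log_two_gt_d9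
  have hLsplit : L = Real.log 2 + L0 := by
    rw [hLdef, hL0def, show (2:ℝ)/δ = 2 * (1/δ) by ring,
      Real.log_mul (by norm_num) (by positivity)]
  have hLpos : 0 < L := by rw [hLsplit]; linarith
  have hk1 : 1 ≤ k := by
    rw [hk]
    exact Nat.one_le_iff_ne_zero.2 (by
      simp only [ne_eq, Nat.ceil_eq_zero, not_le]
      positivity)
  have hklb : 8 * L0 ≤ (k : ℝ) := by rw [hk]; exact Nat.le_ceil _
  have hkub : (k : ℝ) ≤ 8 * L0 + 1 := by
    rw [hk]; exact (Nat.ceil_lt_add_one (by positivity)).le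
  have hkpos : (0:ℝ) < k := by positivity
  have hmpos : (0:ℝ) < m := by exact_mod_cast hm
  have hNpos : (0:ℝ) < N := by
    have : (N:ℝ) = (k:ℝ) * m := by exact_mod_cast congrArg Nat.cast hN
    rw [this]; positivity
  have hNr : (N:ℝ) = (k:ℝ) * m := by exact_mod_cast congrArg Nat.cast hN
  rcases eq_or_lt_of_le hσ with hσ0 | hσpos
  · -- degenerate case σ = 0 : all X i are a.e. equal to μ
    have hXconst : ∀ p, X p =ᵐ[P] fun _ => μ := by
      intro p
      have hint : Integrable (fun ω => (X p ω - μ)^2) P := by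
        have := ((hL2 p).sub (memLp_const μ)).integrable_sq
        simpa using this
      have h0 : ∫ ω, (X p ω - μ)^2 ∂P = 0 := by rw [← hvar p, ← hσ0]; norm_num
      have := (integral_eq_zero_iff_of_nonneg (fun ω => sq_nonneg _) hint).1 h0
      filter_upwards [this] with ω hω
      have : (X p ω - μ)^2 = 0 := hω
      have := pow_eq_zero_iff (n := 2) (by norm_num) |>.1 this
      linarith [this]
    have hae : ∀ᵐ ω ∂P, ∀ p, X p ω = μ := by
      rw [MeasureTheory.ae_all_iff]
      exact fun p => hXconst p
    have hgood : ∀ᵐ ω ∂P, |muhat ω - μ| ≤ 8 * σ * Real.sqrt (Real.log (2 / δ) / N) := by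
      filter_upwards [hae] with ω hω
      have hZμ : ∀ j, Z j ω = μ := by
        intro j
        rw [hZ]
        simp only [hω]
        rw [Finset.sum_const, Finset.card_univ, Fintype.card_fin, nsmul_eq_mul]
        field_simp
      obtain ⟨h1, h2⟩ := hmed ω
      have hc1 : 0 < (Finset.univ.filter fun j : Fin k => Z j ω ≤ muhat ω).card := by omega
      have hc2 : 0 < (Finset.univ.filter fun j : Fin k => muhat ω ≤ Z j ω).card := by omega
      obtain ⟨j1, hj1⟩ := Finset.card_pos.1 hc1
      obtain ⟨j2, hj2⟩ := Finset.card_pos.1 hc2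
      simp only [Finset.mem_filter] at hj1 hj2
      have e1 : μ ≤ muhat ω := (hZμ j1) ▸ hj1.2
      have e2 : muhat ω ≤ μ := (hZμ j2) ▸ hj2.2
      have : muhat ω = μ := le_antisymm e2 e1
      rw [this, sub_self, abs_zero, ← hσ0]
      simp
    have hsetmeas : MeasurableSet {ω | |muhat ω - μ| ≤ 8 * σ * Real.sqrt (Real.log (2 / δ) / N)} :=
      measurableSet_le ((hmeas.sub measurable_const).abs) measurable_const
    have hcompl : P {ω | |muhat ω - μ| ≤ 8 * σ * Real.sqrt (Real.log (2 / δ) / N)}ᶜ = 0 := by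
      have := ae_iff.1 hgood
      simpa [Set.compl_setOf] using this
    have : P {ω | |muhat ω - μ| ≤ 8 * σ * Real.sqrt (Real.log (2 / δ) / N)} = 1 :=
      (prob_compl_eq_zero_iff₀ hsetmeas.nullMeasurableSet).1 hcompl
    rw [this]
    exact ENNReal.ofReal_le_one.2 (by linarith)
  · -- main case σ > 0
    -- measurable modifications of the X's
    set Y : Fin k × Fin m → Ω → ℝ := fun p => ((hL2 p).1.mk (X p)) with hYdef
    have hYmeas : ∀ p, Measurable (Y p) := fun p => (hL2 p).1.stronglyMeasurable_mk.measurable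
    have hXY : ∀ p, X p =ᵐ[P] Y p := fun p => (hL2 p).1.ae_eq_mk
    have hYL2 : ∀ p, MemLp (Y p) 2 P := fun p => (hL2 p).ae_eq (hXY p)
    have hindepY : iIndepFun Y P := iIndepFun_ae_congr hindep hXY
    have hYmean : ∀ p, ∫ ω, Y p ω ∂P = μ := fun p => by
      rw [← integral_congr_ae (hXY p)]; exact (hμ p).symm
    have hYvar : ∀ p, variance (Y p) P = σ ^ 2 := by
      intro p
      rw [variance_eq_integral (hYmeas p).aemeasurable, hvar p]
      apply integral_congr_ae
      filter_upwards [hXY p] with ω hω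
      simp [hYmean p, hω]
    -- block means of the modified variables
    set ZY : Fin k → Ω → ℝ := fun j ω => (m:ℝ)⁻¹ * ∑ i : Fin m, Y (j, i) ω with hZYdef
    have hZYmeas : ∀ j, Measurable (ZY j) := fun j =>
      (Finset.measurable_sum _ fun i _ => hYmeas (j, i)).const_mul _
    have haeXY : ∀ᵐ ω ∂P, ∀ p, X p ω = Y p ω := (MeasureTheory.ae_all_iff).2 fun p => hXY p
    have hZZY : ∀ᵐ ω ∂P, ∀ j, Z j ω = ZY j ω := by
      filter_upwards [haeXY] with ω hω j
      rw [hZ]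
      simp only [hZYdef]
      congr 1
      exact Finset.sum_congr rfl fun i _ => hω (j, i)
    have hZYL2 : ∀ j, MemLp (ZY j) 2 P := by
      intro j
      have h1 : MemLp (∑ i : Fin m, Y (j, i)) 2 P :=
        memLp_finset_sum' _ (fun i _ => hYL2 (j, i))
      have h2 := h1.const_mul ((m:ℝ)⁻¹)
      exact h2.ae_eq (Filter.Eventually.of_forall fun ω => by simp [hZYdef, Finset.sum_apply])
    have hYint : ∀ p : Fin k × Fin m, Integrable (Y p) P := fun p => (hYL2 p).integrable one_le_two
    have hZYmean : ∀ j, ∫ ω, ZY j ω ∂P = μ := by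
      intro j
      simp only [hZYdef]
      rw [MeasureTheory.integral_const_mul, integral_finset_sum _ (fun i _ => hYint (j, i))]
      simp only [hYmean]
      rw [Finset.sum_const, Finset.card_univ, Fintype.card_fin, nsmul_eq_mul]
      field_simp
    have hZYvar : ∀ j, variance (ZY j) P = σ ^ 2 / m := by
      intro j
      have hsum : variance (∑ i : Fin m, Y (j, i)) P = ∑ i : Fin m, variance (Y (j,i)) P := by
        apply IndepFun.variance_sum (fun i _ => hYL2 (j, i))
        intro a _ b _ hab
        exact hindepY.indepFun (fun hctr => hab (Prod.ext_iff.1 hctr).2)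
      have heq : ZY j = fun ω => (m:ℝ)⁻¹ * (∑ i : Fin m, Y (j, i)) ω := by
        funext ω; simp [hZYdef, Finset.sum_apply]
      rw [heq, variance_const_mul, hsum]
      simp only [hYvar]
      rw [Finset.sum_const, Finset.card_univ, Fintype.card_fin, nsmul_eq_mul]
      field_simp
    -- deviation events and Chebyshev
    set ε : ℝ := 8 * σ * Real.sqrt (L / N) with hεdef
    have hLN : (0:ℝ) ≤ L / N := by positivity
    have hεpos : 0 < ε := by
      apply mul_pos (by linarith)
      exact Real.sqrt_pos.2 (by positivity)
    have hε2 : ε ^ 2 = 64 * σ^2 * (L / N) := by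
      rw [hεdef, mul_pow, mul_pow, Real.sq_sqrt hLN]; ring
    set A : Fin k → Set Ω := fun j => {ω | ε < |ZY j ω - μ|} with hAdef
    have hAmeas : ∀ j, MeasurableSet (A j) :=
      fun j => measurableSet_lt measurable_const ((hZYmeas j).sub measurable_const).abs
    set q : ℝ := (k:ℝ) / (64 * L) with hqdef
    have hq0 : 0 ≤ q := by positivity
    have hPA : ∀ j, (P (A j)).toReal ≤ q := by
      intro j
      have hcheb := meas_ge_le_variance_div_sq (hZYL2 j) hεpos
      have h1 : P (A j) ≤ ENNReal.ofReal (variance (ZY j) P / ε ^ 2) := by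
        refine le_trans (measure_mono ?_) hcheb
        intro ω hω
        show ε ≤ |ZY j ω - ∫ a, ZY j a ∂P|
        rw [hZYmean j]
        exact le_of_lt hω
      have h2 : variance (ZY j) P / ε ^ 2 = q := by
        rw [hZYvar j, hε2, hqdef, hNr]
        have hσne : σ ≠ 0 := ne_of_gt hσpos
        field_simp
      rw [h2] at h1
      calc (P (A j)).toReal ≤ (ENNReal.ofReal q).toReal :=
            ENNReal.toReal_mono ENNReal.ofReal_ne_top h1
        _ = q := ENNReal.toReal_ofReal hq0
    -- indicator variables
    set f : (Fin m → ℝ) → ℝ :=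
      fun v => if ε < |(m:ℝ)⁻¹ * ∑ i : Fin m, v i - μ| then 1 else 0 with hfdef
    have hfmeas : Measurable f := by
      apply Measurable.ite _ measurable_const measurable_const
      apply measurableSet_lt measurable_const
      exact (((Finset.measurable_sum _ fun i _ => measurable_pi_apply i).const_mul
        ((m:ℝ)⁻¹)).sub measurable_const).abs
    set W : Fin k → Ω → ℝ := fun j => f ∘ (fun ω i => Y (j, i) ω) with hWdef
    have hWindep : iIndepFun W P :=
      (iIndepFun_blocks hYmeas hindepY).comp (fun _ => f) (fun _ => hfmeas)
    have hWmeas : ∀ j, Measurable (W j) := fun j =>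
      hfmeas.comp (measurable_pi_iff.2 fun i => hYmeas (j, i))
    have hWval : ∀ j ω, W j ω = if ω ∈ A j then 1 else 0 := by
      intro j ω
      simp only [hWdef, hfdef, hAdef, hZYdef, Function.comp_apply, Set.mem_setOf_eq]
    have hW0 : ∀ j ω, 0 ≤ W j ω := by
      intro j ω; rw [hWval]; split <;> norm_num
    set t : ℝ := Real.log 4 with htdef
    have ht0 : 0 ≤ t := Real.log_nonneg (by norm_num)
    have het : Real.exp t = 4 := Real.exp_log (by norm_num)
    have hexpW : ∀ j, (fun ω => Real.exp (t * W j ω))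
        = fun ω => (A j).indicator (fun _ => (3:ℝ)) ω + 1 := by
      intro j; funext ω
      by_cases hω : ω ∈ A j
      · rw [hWval]
        simp only [hω, if_true, mul_one, het, Set.indicator_of_mem hω]
        norm_num
      · rw [hWval]
        simp [hω, Set.indicator_of_notMem]
    have hintW : ∀ j, Integrable (fun ω => Real.exp (t * W j ω)) P := by
      intro j
      rw [hexpW j]
      exact ((integrable_const (3:ℝ)).indicator (hAmeas j)).add (integrable_const 1)
    have hmgfW : ∀ j, mgf (W j) P t = 3 * (P (A j)).toReal + 1 := by
      intro j
      have : mgf (W j) P t = ∫ ω, Real.exp (t * W j ω) ∂P := rfl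
      rw [this, show (fun ω => Real.exp (t * W j ω)) = _ from hexpW j,
        integral_add ((integrable_const (3:ℝ)).indicator (hAmeas j)) (integrable_const 1),
        integral_indicator_const (3:ℝ) (hAmeas j), integral_const]
      simp [mul_comm, measureReal_def]
    have hmgfW_le : ∀ j, mgf (W j) P t ≤ Real.exp (3 * q) := by
      intro j
      rw [hmgfW j]
      have h1 := hPA j
      have h2 := Real.add_one_le_exp (3 * q)
      linarith
    set S : Ω → ℝ := ∑ j : Fin k, W j with hSdef
    have hmgfS : mgf S P t ≤ Real.exp (3 * q * k) := by
      rw [hSdef, hWindep.mgf_sum hWmeas Finset.univ]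
      calc ∏ j : Fin k, mgf (W j) P t ≤ ∏ _j : Fin k, Real.exp (3 * q) :=
            Finset.prod_le_prod (fun j _ => mgf_nonneg) (fun j _ => hmgfW_le j)
        _ = Real.exp (3 * q * k) := by
            rw [Finset.prod_const, Finset.card_univ, Fintype.card_fin, ← Real.exp_nat_mul]
            ring_nf
    have hSint : Integrable (fun ω => Real.exp (t * S ω)) P := by
      rw [hSdef]
      exact hWindep.integrable_exp_mul_sum hWmeas (fun j _ => hintW j)
    have hcher := measure_ge_le_exp_mul_mgf (μ := P) (X := S) ((k:ℝ)/2) ht0 hSint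
    have hfinal : (P {ω | (k:ℝ)/2 ≤ S ω}).toReal ≤ δ := by
      refine hcher.trans ?_
      have hq18 : q ≤ 1/8 := by
        rw [hqdef, div_le_iff₀ (by positivity)]
        linarith [hkub, hlog2]
      have hlog4 : t = 2 * Real.log 2 := by
        rw [htdef, show (4:ℝ) = 2^2 by norm_num, Real.log_pow]
        push_cast; ring
      calc Real.exp (-t * ((k:ℝ)/2)) * mgf S P t
          ≤ Real.exp (-t * ((k:ℝ)/2)) * Real.exp (3*q*(k:ℝ)) :=
            mul_le_mul_of_nonneg_left hmgfS (Real.exp_nonneg _)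
        _ = Real.exp (-t * ((k:ℝ)/2) + 3*q*(k:ℝ)) := (Real.exp_add _ _).symm
        _ ≤ Real.exp (-(2*L0)) := by
            apply Real.exp_le_exp.2
            have h3 : 3*q*(k:ℝ) ≤ 3*(k:ℝ)/8 := by
              have := mul_le_mul_of_nonneg_right hq18 hkpos.le
              linarith
            have h4 := mul_le_mul_of_nonneg_right hlog2.le hkpos.le
            rw [hlog4]
            linarith [hklb]
        _ = δ ^ 2 := by
            rw [hL0def, one_div, Real.log_inv,
              show -(2 * -Real.log δ) = (2:ℕ) * Real.log δ by push_cast; ring,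
              Real.exp_nat_mul, Real.exp_log hδ0]
        _ ≤ δ := by nlinarith
    have hPbad2 : P {ω | (k:ℝ)/2 ≤ S ω} ≤ ENNReal.ofReal δ := by
      rw [← ENNReal.ofReal_toReal (measure_ne_top P {ω | (k:ℝ)/2 ≤ S ω})]
      exact ENNReal.ofReal_le_ofReal hfinal
    -- the median deviates only if at least half the blocks deviate
    have hkey : ∀ ω, (∀ j, Z j ω = ZY j ω) → ¬(|muhat ω - μ| ≤ ε) → (k:ℝ)/2 ≤ S ω := by
      intro ω hZeq hbad
      push_neg at hbad
      have hSω : S ω = ∑ j : Fin k, W j ω := by rw [hSdef]; simp [Finset.sum_apply]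
      rcases lt_abs.1 hbad with hcase | hcase
      · set F := Finset.univ.filter (fun j : Fin k => muhat ω ≤ Z j ω) with hF
        have hcard := (hmed ω).2
        have hmem : ∀ j ∈ F, W j ω = 1 := by
          intro j hj
          rw [hWval]
          rw [if_pos]
          show ε < |ZY j ω - μ|
          have h1 : muhat ω ≤ Z j ω := (Finset.mem_filter.1 hj).2
          rw [hZeq j] at h1
          have h2 : ε < ZY j ω - μ := by linarith
          exact lt_of_lt_of_le h2 (le_abs_self _)
        have hsum : (F.card : ℝ) ≤ ∑ j : Fin k, W j ω := by
          calc (F.card : ℝ) = ∑ _j ∈ F, (1:ℝ) := by simp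
            _ = ∑ j ∈ F, W j ω := Finset.sum_congr rfl (fun j hj => (hmem j hj).symm)
            _ ≤ ∑ j : Fin k, W j ω :=
                Finset.sum_le_sum_of_subset_of_nonneg (Finset.subset_univ F)
                  (fun j _ _ => hW0 j ω)
        rw [hSω]
        have hkc : (k:ℝ) ≤ 2 * F.card := by exact_mod_cast hcard
        linarith
      · set F := Finset.univ.filter (fun j : Fin k => Z j ω ≤ muhat ω) with hF
        have hcard := (hmed ω).1
        have hmem : ∀ j ∈ F, W j ω = 1 := by
          intro j hj
          rw [hWval]
          rw [if_pos]
          show ε < |ZY j ω - μ|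
          have h1 : Z j ω ≤ muhat ω := (Finset.mem_filter.1 hj).2
          rw [hZeq j] at h1
          have h2 : ε < -(ZY j ω - μ) := by linarith
          exact lt_of_lt_of_le h2 (neg_le_abs _)
        have hsum : (F.card : ℝ) ≤ ∑ j : Fin k, W j ω := by
          calc (F.card : ℝ) = ∑ _j ∈ F, (1:ℝ) := by simp
            _ = ∑ j ∈ F, W j ω := Finset.sum_congr rfl (fun j hj => (hmem j hj).symm)
            _ ≤ ∑ j : Fin k, W j ω :=
                Finset.sum_le_sum_of_subset_of_nonneg (Finset.subset_univ F)
                  (fun j _ _ => hW0 j ω)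
        rw [hSω]
        have hkc : (k:ℝ) ≤ 2 * F.card := by exact_mod_cast hcard
        linarith
    have hPbad : P {ω | ¬(|muhat ω - μ| ≤ ε)} ≤ P {ω | (k:ℝ)/2 ≤ S ω} := by
      apply measure_mono_ae
      filter_upwards [hZZY] with ω hω hbad
      exact hkey ω hω hbad
    -- conclusion
    have hGmeas : MeasurableSet {ω | |muhat ω - μ| ≤ 8 * σ * Real.sqrt (Real.log (2 / δ) / N)} :=
      measurableSet_le ((hmeas.sub measurable_const).abs) measurable_const
    have hcompl : P {ω | |muhat ω - μ| ≤ 8 * σ * Real.sqrt (Real.log (2 / δ) / N)}ᶜ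
        ≤ ENNReal.ofReal δ := by
      have hGc : {ω | |muhat ω - μ| ≤ 8 * σ * Real.sqrt (Real.log (2 / δ) / N)}ᶜ
          = {ω | ¬(|muhat ω - μ| ≤ ε)} := by
        ext ω
        simp [hεdef, hLdef]
      rw [hGc]
      exact le_trans hPbad hPbad2
    have h1 : P {ω | |muhat ω - μ| ≤ 8 * σ * Real.sqrt (Real.log (2 / δ) / N)}
        + P {ω | |muhat ω - μ| ≤ 8 * σ * Real.sqrt (Real.log (2 / δ) / N)}ᶜ = 1 :=
      prob_add_prob_compl hGmeas
    have h2 : ENNReal.ofReal (1 - δ) + ENNReal.ofReal δ = 1 := by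
      rw [← ENNReal.ofReal_add (by linarith) (by linarith)]
      norm_num
    have h3 : ENNReal.ofReal (1 - δ) + ENNReal.ofReal δ
        ≤ P {ω | |muhat ω - μ| ≤ 8 * σ * Real.sqrt (Real.log (2 / δ) / N)} + ENNReal.ofReal δ := by
      rw [h2, ← h1]
      exact add_le_add le_rfl hcompl
    exact (ENNReal.add_le_add_iff_right ENNReal.ofReal_ne_top).1 h3
end

section
/- Let Z_1,...,Z_k ∈ R^d and define S_a as above. The function a ↦ diam(S_a^c) is continuous on R^d, and consequently the minimum of diam(S_a^c) over a ∈ R^d is attained. -/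
open Metric Bornology

section Aux

variable {d k : ℕ}

/-- auxiliary enlarged complement sets -/
def Cset (Z : Fin k → EuclideanSpace ℝ (Fin d)) (a : EuclideanSpace ℝ (Fin d)) (t : ℝ) :
    Set (EuclideanSpace ℝ (Fin d)) :=
  {x | ∃ T : Finset (Fin k), k ≤ 2 * T.card ∧ ∀ j ∈ T, ‖Z j - x‖ ≤ ‖Z j - a‖ + t}

lemma mem_Cset_zero_iff (Z : Fin k → EuclideanSpace ℝ (Fin d)) (a x : EuclideanSpace ℝ (Fin d)) :
    x ∈ Cset Z a 0 ↔ ¬ ∃ J : Finset (Fin k), 2 * J.card > k ∧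
      ∀ j ∈ J, ‖Z j - a‖ < ‖Z j - x‖ := by
  constructor
  · rintro ⟨T, hT, hTx⟩ ⟨J, hJ, hJx⟩
    have hdisj : Disjoint J T := by
      rw [Finset.disjoint_left]
      intro j hj hjT
      have h1 := hTx j hjT
      have h2 := hJx j hj
      linarith
    have hcard : J.card + T.card ≤ k := by
      have := Finset.card_le_univ (J ∪ T)
      rw [Finset.card_union_of_disjoint hdisj] at this
      simpa using this
    omega
  · intro h
    refine ⟨Finset.univ.filter (fun j => ‖Z j - x‖ ≤ ‖Z j - a‖), ?_, ?_⟩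
    · have hJ : ¬ (2 * (Finset.univ.filter (fun j => ¬ ‖Z j - x‖ ≤ ‖Z j - a‖)).card > k) := by
        intro hgt
        exact h ⟨_, hgt, fun j hj => by
          simp only [Finset.mem_filter, not_le] at hj
          exact hj.2⟩
      have hsum := Finset.card_filter_add_card_filter_not
        (s := (Finset.univ : Finset (Fin k))) (p := fun j => ‖Z j - x‖ ≤ ‖Z j - a‖)
      simp only [Finset.card_univ, Fintype.card_fin] at hsum
      omega
    · intro j hj
      simp only [Finset.mem_filter] at hj
      linarith [hj.2]

lemma Cset_mono (Z : Fin k → EuclideanSpace ℝ (Fin d)) (a : EuclideanSpace ℝ (Fin d))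
    {t t' : ℝ} (h : t ≤ t') : Cset Z a t ⊆ Cset Z a t' := by
  rintro x ⟨T, hT, hTx⟩
  exact ⟨T, hT, fun j hj => (hTx j hj).trans (by linarith)⟩

lemma Cset_shift (Z : Fin k → EuclideanSpace ℝ (Fin d)) (a a' : EuclideanSpace ℝ (Fin d))
    (t : ℝ) : Cset Z a' t ⊆ Cset Z a (t + dist a a') := by
  rintro x ⟨T, hT, hTx⟩
  refine ⟨T, hT, fun j hj => ?_⟩
  have h1 : ‖Z j - a'‖ ≤ ‖Z j - a‖ + dist a a' := by
    have := norm_sub_le_norm_sub_add_norm_sub (Z j) a a'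
    rw [dist_eq_norm]
    linarith [this]
  linarith [hTx j hj]

lemma isClosed_Cset (Z : Fin k → EuclideanSpace ℝ (Fin d)) (a : EuclideanSpace ℝ (Fin d))
    (t : ℝ) : IsClosed (Cset Z a t) := by
  have : Cset Z a t = ⋃ T : {T : Finset (Fin k) // k ≤ 2 * T.card},
      ⋂ j ∈ T.1, {x : EuclideanSpace ℝ (Fin d) | ‖Z j - x‖ ≤ ‖Z j - a‖ + t} := by
    ext x
    simp only [Cset, Set.mem_setOf_eq, Set.mem_iUnion, Set.mem_iInter, Subtype.exists]
    constructor
    · rintro ⟨T, hT, hTx⟩; exact ⟨T, hT, fun j hj => hTx j hj⟩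
    · rintro ⟨T, hT, hTx⟩; exact ⟨T, hT, fun j hj => hTx j hj⟩
  rw [this]
  apply isClosed_iUnion_of_finite
  intro T
  apply isClosed_biInter
  intro j hj
  exact isClosed_le ((continuous_const.sub continuous_id).norm) continuous_const

lemma isBounded_Cset (hk : 0 < k) (Z : Fin k → EuclideanSpace ℝ (Fin d))
    (a : EuclideanSpace ℝ (Fin d)) (t : ℝ) : IsBounded (Cset Z a t) := by
  have hne : (Finset.univ : Finset (Fin k)).Nonempty := ⟨⟨0, hk⟩, Finset.mem_univ _⟩
  set j0 : Fin k := ⟨0, hk⟩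
  apply (isBounded_closedBall (x := Z j0)
    (r := (Finset.univ.sup' hne fun j => ‖Z j - a‖ + dist (Z j) (Z j0)) + |t|)).subset
  rintro x ⟨T, hT, hTx⟩
  have hTne : T.Nonempty := Finset.card_pos.mp (by omega)
  obtain ⟨j, hj⟩ := hTne
  have h1 : dist x (Z j0) ≤ dist x (Z j) + dist (Z j) (Z j0) := dist_triangle _ _ _
  have h2 : dist x (Z j) = ‖Z j - x‖ := by rw [dist_eq_norm, norm_sub_rev]
  have h3 : ‖Z j - a‖ + dist (Z j) (Z j0) ≤ Finset.univ.sup' hne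
      fun j => ‖Z j - a‖ + dist (Z j) (Z j0) :=
    Finset.le_sup' (f := fun j => ‖Z j - a‖ + dist (Z j) (Z j0)) (Finset.mem_univ j)
  have h4 := hTx j hj
  have ht : t ≤ |t| := le_abs_self t
  simp only [mem_closedBall]
  linarith

lemma isCompact_Cset (hk : 0 < k) (Z : Fin k → EuclideanSpace ℝ (Fin d))
    (a : EuclideanSpace ℝ (Fin d)) (t : ℝ) : IsCompact (Cset Z a t) :=
  Metric.isCompact_of_isClosed_isBounded (isClosed_Cset Z a t) (isBounded_Cset hk Z a t)

lemma mem_Cset_zero_of_forall (Z : Fin k → EuclideanSpace ℝ (Fin d))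
    (a x : EuclideanSpace ℝ (Fin d))
    (hx : ∀ n : ℕ, x ∈ Cset Z a (1 / (n + 1))) : x ∈ Cset Z a 0 := by
  choose T hT1 hT2 using hx
  obtain ⟨T₀, hfib⟩ := Finite.exists_infinite_fiber T
  have hfib' : (T ⁻¹' {T₀}).Infinite := Set.infinite_coe_iff.mp hfib
  obtain ⟨n₀, hn₀⟩ := hfib'.nonempty
  refine ⟨T₀, by rw [← hn₀]; exact hT1 n₀, fun j hj => ?_⟩
  have : ∀ ε > 0, ‖Z j - x‖ ≤ ‖Z j - a‖ + ε := by
    intro ε hε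
    obtain ⟨n, hn⟩ := exists_nat_one_div_lt hε
    obtain ⟨m, hm, hmn⟩ := hfib'.exists_gt n
    have hjm : j ∈ T m := by rw [Set.mem_preimage, Set.mem_singleton_iff] at hm; rw [hm]; exact hj
    have h1 := hT2 m j hjm
    have h2 : (1 : ℝ) / (m + 1) ≤ 1 / (n + 1) := by
      apply one_div_le_one_div_of_le
      · positivity
      · have : (n:ℝ) ≤ m := Nat.cast_le.mpr hmn.le
        linarith
    linarith
  rw [add_zero]
  exact le_of_forall_pos_le_add this

lemma exists_upper (hk : 0 < k) (Z : Fin k → EuclideanSpace ℝ (Fin d))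
    (a : EuclideanSpace ℝ (Fin d)) {δ : ℝ} (hδ : 0 < δ) :
    ∃ ε > 0, diam (Cset Z a ε) ≤ diam (Cset Z a 0) + δ := by
  by_contra hcon
  push_neg at hcon
  set c : ℝ := diam (Cset Z a 0) + δ with hc
  have hc0 : 0 < c := by have := diam_nonneg (s := Cset Z a 0); linarith
  have hpair : ∀ n : ℕ, ∃ p : (EuclideanSpace ℝ (Fin d)) × (EuclideanSpace ℝ (Fin d)),
      p.1 ∈ Cset Z a (1/(n+1)) ∧ p.2 ∈ Cset Z a (1/(n+1)) ∧ c ≤ dist p.1 p.2 := by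
    intro n
    have hd := hcon (1/(n+1)) (by positivity)
    by_contra hno
    push_neg at hno
    have : diam (Cset Z a (1/(n+1))) ≤ c := by
      apply diam_le_of_forall_dist_le hc0.le
      intro x hx y hy
      by_contra hgt
      push_neg at hgt
      exact absurd hgt.le (not_le.mpr (hno (x, y) hx hy))
    linarith
  set K : ℕ → Set ((EuclideanSpace ℝ (Fin d)) × (EuclideanSpace ℝ (Fin d))) :=
    fun n => (Cset Z a (1/(n+1)) ×ˢ Cset Z a (1/(n+1))) ∩ {p | c ≤ dist p.1 p.2} with hK
  have hKanti : ∀ {m n : ℕ}, m ≤ n → K n ⊆ K m := by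
    intro m n hmn
    have hsub : Cset Z a (1/(n+1)) ⊆ Cset Z a (1/(m+1)) := by
      apply Cset_mono
      apply one_div_le_one_div_of_le (by positivity)
      have : (m:ℝ) ≤ n := Nat.cast_le.mpr hmn
      linarith
    rintro p ⟨⟨h1, h2⟩, h3⟩
    exact ⟨⟨hsub h1, hsub h2⟩, h3⟩
  have hclosed : ∀ n, IsClosed (K n) := by
    intro n
    apply IsClosed.inter
    · exact (isClosed_Cset Z a _).prod (isClosed_Cset Z a _)
    · exact isClosed_le continuous_const continuous_dist
  have hcpt : ∀ n, IsCompact (K n) := fun n =>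
    (((isCompact_Cset hk Z a _).prod (isCompact_Cset hk Z a _)).inter_right
      (isClosed_le continuous_const continuous_dist))
  have hne : ∀ n, (K n).Nonempty := by
    intro n
    obtain ⟨p, h1, h2, h3⟩ := hpair n
    exact ⟨p, ⟨h1, h2⟩, h3⟩
  obtain ⟨p, hp⟩ := IsCompact.nonempty_iInter_of_directed_nonempty_isCompact_isClosed K
    (fun m n => ⟨max m n, hKanti (le_max_left m n), hKanti (le_max_right m n)⟩)
    hne hcpt hclosed
  simp only [Set.mem_iInter] at hp
  have hp1 : p.1 ∈ Cset Z a 0 := mem_Cset_zero_of_forall Z a _ (fun n => (hp n).1.1)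
  have hp2 : p.2 ∈ Cset Z a 0 := mem_Cset_zero_of_forall Z a _ (fun n => (hp n).1.2)
  have hdist : dist p.1 p.2 ≤ diam (Cset Z a 0) :=
    dist_le_diam_of_mem (isBounded_Cset hk Z a 0) hp1 hp2
  have := (hp 0).2
  simp only [Set.mem_setOf_eq] at this
  linarith

lemma point_Cset (hk : 0 < k) (Z : Fin k → EuclideanSpace ℝ (Fin d))
    {a x : EuclideanSpace ℝ (Fin d)} (hx : x ∈ Cset Z a 0) (hxa : x ≠ a)
    {θ : ℝ} (h0 : 0 < θ) (h1 : θ < 1) :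
    ∃ ε > 0, a + θ • (x - a) ∈ Cset Z a (-ε) := by
  obtain ⟨T, hT, hTx⟩ := hx
  have hTne : T.Nonempty := Finset.card_pos.mp (by omega)
  set y : EuclideanSpace ℝ (Fin d) := a + θ • (x - a) with hy
  have hkey : ∀ j ∈ T, ‖Z j - y‖ < ‖Z j - a‖ := by
    intro j hj
    have heq : Z j - y = (1 - θ) • (Z j - a) + θ • (Z j - x) := by
      rw [hy]; module
    rw [heq]
    apply norm_combo_lt_of_ne (le_refl ‖Z j - a‖)
      (by have := hTx j hj; linarith) ?_ (by linarith) h0 (by ring)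
    intro hcontra
    exact hxa (sub_right_injective hcontra).symm
  refine ⟨T.inf' hTne (fun j => ‖Z j - a‖ - ‖Z j - y‖), ?_, T, hT, ?_⟩
  · rw [gt_iff_lt, Finset.lt_inf'_iff]
    intro j hj
    linarith [hkey j hj]
  · intro j hj
    have := Finset.inf'_le (f := fun j => ‖Z j - a‖ - ‖Z j - y‖) hj
    linarith [this]

lemma lower_pair (hk : 0 < k) (Z : Fin k → EuclideanSpace ℝ (Fin d))
    {a p q : EuclideanSpace ℝ (Fin d)} (hp : p ∈ Cset Z a 0) (hq : q ∈ Cset Z a 0)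
    (hqa : q ≠ a) (hpq : p ≠ q) {η : ℝ} (hη : 0 < η) :
    ∃ ε > 0, ∃ p' q', p' ∈ Cset Z a (-ε) ∧ q' ∈ Cset Z a (-ε) ∧
      dist p q - η ≤ dist p' q' := by
  have hdpq : 0 < dist p q := dist_pos.mpr hpq
  by_cases hpa : p = a
  · -- p = a; contract q by θ and θ'
    have hdqa : dist q a = dist p q := by rw [hpa, dist_comm]
    set θ : ℝ := max (1/2) (1 - (η/2) / dist p q) with hθ
    set θ' : ℝ := min (1/4) ((η/2) / dist p q) with hθ'
    have hθpos : 0 < θ := lt_of_lt_of_le (by norm_num) (le_max_left _ _)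
    have hθlt : θ < 1 := by
      apply max_lt (by norm_num)
      have : 0 < (η/2) / dist p q := by positivity
      linarith
    have hθ'pos : 0 < θ' := lt_min (by norm_num) (by positivity)
    have hθ'lt : θ' < 1 := lt_of_le_of_lt (min_le_left _ _) (by norm_num)
    obtain ⟨ε₁, hε₁, h1⟩ := point_Cset hk Z hq hqa hθpos hθlt
    obtain ⟨ε₂, hε₂, h2⟩ := point_Cset hk Z hq hqa hθ'pos hθ'lt
    refine ⟨min ε₁ ε₂, lt_min hε₁ hε₂, a + θ' • (q - a), a + θ • (q - a),
      Cset_mono Z a (neg_le_neg (min_le_right ε₁ ε₂)) h2,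
      Cset_mono Z a (neg_le_neg (min_le_left ε₁ ε₂)) h1, ?_⟩
    have hθ'θ : θ' ≤ θ :=
      le_trans (le_trans (min_le_left _ _) (by norm_num)) (le_max_left _ _)
    have hdist : dist (a + θ' • (q - a)) (a + θ • (q - a)) = (θ - θ') * dist q a := by
      rw [dist_eq_norm]
      have he : (a + θ' • (q - a)) - (a + θ • (q - a)) = (θ' - θ) • (q - a) := by module
      rw [he, norm_smul, Real.norm_eq_abs, abs_of_nonpos (by linarith), dist_eq_norm]
      ring
    rw [hdist, hdqa]
    have ha1 : (1 - (η/2) / dist p q) * dist p q = dist p q - η/2 := by field_simp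
    have ha2 : ((η/2) / dist p q) * dist p q = η/2 := by field_simp
    have hb1 : (1 - (η/2) / dist p q) * dist p q ≤ θ * dist p q :=
      mul_le_mul_of_nonneg_right (le_max_right _ _) hdpq.le
    have hb2 : θ' * dist p q ≤ ((η/2) / dist p q) * dist p q :=
      mul_le_mul_of_nonneg_right (min_le_right _ _) hdpq.le
    have hring : (θ - θ') * dist p q = θ * dist p q - θ' * dist p q := by ring
    rw [hring]
    linarith
  · -- p ≠ a and q ≠ a
    set θ : ℝ := max (1/2) (1 - η / dist p q) with hθ
    have hθpos : 0 < θ := lt_of_lt_of_le (by norm_num) (le_max_left _ _)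
    have hθlt : θ < 1 := by
      apply max_lt (by norm_num)
      have : 0 < η / dist p q := by positivity
      linarith
    obtain ⟨ε₁, hε₁, h1⟩ := point_Cset hk Z hp hpa hθpos hθlt
    obtain ⟨ε₂, hε₂, h2⟩ := point_Cset hk Z hq hqa hθpos hθlt
    refine ⟨min ε₁ ε₂, lt_min hε₁ hε₂, a + θ • (p - a), a + θ • (q - a),
      Cset_mono Z a (neg_le_neg (min_le_left ε₁ ε₂)) h1,
      Cset_mono Z a (neg_le_neg (min_le_right ε₁ ε₂)) h2, ?_⟩
    have hdist : dist (a + θ • (p - a)) (a + θ • (q - a)) = θ * dist p q := by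
      rw [dist_eq_norm, dist_eq_norm]
      have : (a + θ • (p - a)) - (a + θ • (q - a)) = θ • (p - q) := by module
      rw [this, norm_smul, Real.norm_eq_abs, abs_of_pos hθpos]
    rw [hdist]
    have hθge : 1 - η / dist p q ≤ θ := le_max_right _ _
    have : (1 - η / dist p q) * dist p q ≤ θ * dist p q := by
      apply mul_le_mul_of_nonneg_right hθge hdpq.le
    have hfield : (1 - η / dist p q) * dist p q = dist p q - η := by
      field_simp
    linarith

lemma exists_lower (hk : 0 < k) (Z : Fin k → EuclideanSpace ℝ (Fin d))
    (a : EuclideanSpace ℝ (Fin d)) {δ : ℝ} (hδ : 0 < δ) :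
    ∃ ε > 0, diam (Cset Z a 0) ≤ diam (Cset Z a (-ε)) + δ := by
  set D : ℝ := diam (Cset Z a 0) with hD
  by_cases hDδ : D ≤ δ
  · exact ⟨1, one_pos, by linarith [diam_nonneg (s := Cset Z a (-1))]⟩
  push_neg at hDδ
  -- get a pair of nearly-diametral points
  have hpair : ∃ p ∈ Cset Z a 0, ∃ q ∈ Cset Z a 0, D - δ/2 < dist p q := by
    by_contra hno
    push_neg at hno
    have : D ≤ D - δ/2 := diam_le_of_forall_dist_le (by linarith) hno
    linarith
  obtain ⟨p, hp, q, hq, hd⟩ := hpair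
  have hdpos : 0 < dist p q := by linarith
  have hpq : p ≠ q := dist_pos.mp hdpos
  have key : ∀ p q : EuclideanSpace ℝ (Fin d), p ∈ Cset Z a 0 → q ∈ Cset Z a 0 →
      q ≠ a → p ≠ q → D - δ/2 < dist p q → ∃ ε > 0, D ≤ diam (Cset Z a (-ε)) + δ := by
    intro p q hp hq hqa hpq hd
    obtain ⟨ε, hε, p', q', hp', hq', hdist⟩ :=
      lower_pair hk Z hp hq hqa hpq (η := δ/2) (by linarith)
    refine ⟨ε, hε, ?_⟩
    have hb : IsBounded (Cset Z a (-ε)) := isBounded_Cset hk Z a (-ε)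
    have := dist_le_diam_of_mem hb hp' hq'
    linarith
  by_cases hqa : q = a
  · have hpa : p ≠ a := fun h => hpq (h.trans hqa.symm)
    have := key q p hq hp hpa (Ne.symm hpq) (by rw [dist_comm]; exact hd)
    exact this
  · exact key p q hp hq hqa hpq hd

lemma continuous_diam_Cset (hk : 0 < k) (Z : Fin k → EuclideanSpace ℝ (Fin d)) :
    Continuous (fun a => diam (Cset Z a 0)) := by
  rw [Metric.continuous_iff]
  intro a δ hδ
  obtain ⟨ε₁, hε₁, hup⟩ := exists_upper hk Z a (δ := δ/2) (by linarith)
  obtain ⟨ε₂, hε₂, hlo⟩ := exists_lower hk Z a (δ := δ/2) (by linarith)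
  refine ⟨min ε₁ ε₂, lt_min hε₁ hε₂, fun a' ha' => ?_⟩
  have hda : dist a a' = dist a' a := dist_comm a a'
  have h1 : diam (Cset Z a' 0) ≤ diam (Cset Z a 0) + δ/2 := by
    have hsub : Cset Z a' 0 ⊆ Cset Z a ε₁ := by
      refine (Cset_shift Z a a' 0).trans (Cset_mono Z a ?_)
      rw [zero_add, hda]
      exact le_trans ha'.le (min_le_left _ _)
    calc diam (Cset Z a' 0) ≤ diam (Cset Z a ε₁) :=
          diam_mono hsub (isBounded_Cset hk Z a ε₁)
    _ ≤ _ := hup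
  have h2 : diam (Cset Z a 0) ≤ diam (Cset Z a' 0) + δ/2 := by
    have hsub : Cset Z a (-ε₂) ⊆ Cset Z a' 0 := by
      refine (Cset_shift Z a' a (-ε₂)).trans (Cset_mono Z a' ?_)
      have : dist a' a < ε₂ := lt_of_lt_of_le ha' (min_le_right _ _)
      linarith
    have := diam_mono hsub (isBounded_Cset hk Z a' 0)
    linarith [hlo, this]
  rw [Real.dist_eq, abs_sub_lt_iff]
  constructor <;> linarith

end Aux

/-- The function `a ↦ diam((S a)ᶜ)` is continuous, and its minimum over `a ∈ ℝ^d` is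
attained. -/
theorem diam_compl_Sa_continuous_and_min {d k : ℕ}
    (Z : Fin k → EuclideanSpace ℝ (Fin d))
    (S : EuclideanSpace ℝ (Fin d) → Set (EuclideanSpace ℝ (Fin d)))
    (hS : ∀ a, S a = {x | ∃ J : Finset (Fin k), 2 * J.card > k ∧
      ∀ j ∈ J, ‖Z j - a‖ < ‖Z j - x‖}) :
    Continuous (fun a => Metric.diam (S a)ᶜ) ∧
    ∃ a₀ : EuclideanSpace ℝ (Fin d), ∀ a, Metric.diam (S a₀)ᶜ ≤ Metric.diam (S a)ᶜ := by
  have hcompl : ∀ a, (S a)ᶜ = Cset Z a 0 := by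
    intro a
    ext x
    rw [Set.mem_compl_iff, hS a]
    simp only [Set.mem_setOf_eq]
    exact (mem_Cset_zero_iff Z a x).symm
  rcases Nat.eq_zero_or_pos k with hk | hk
  · -- k = 0 : S a = ∅ for all a, everything is constant
    subst hk
    have hconst : ∀ a : EuclideanSpace ℝ (Fin d), (S a)ᶜ = Set.univ := by
      intro a
      rw [hcompl]
      ext x
      simp only [Set.mem_univ, iff_true]
      exact ⟨∅, by simp, by simp⟩
    constructor
    · have : (fun a => Metric.diam (S a)ᶜ) =
          fun _ => Metric.diam (Set.univ : Set (EuclideanSpace ℝ (Fin d))) := by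
        funext a; rw [hconst]
      rw [this]
      exact continuous_const
    · exact ⟨0, fun a => by rw [hconst, hconst]⟩
  · have heq : (fun a => Metric.diam (S a)ᶜ) = fun a => diam (Cset Z a 0) := by
      funext a; rw [hcompl]
    have hcont : Continuous (fun a => Metric.diam (S a)ᶜ) := by
      rw [heq]; exact continuous_diam_Cset hk Z
    refine ⟨hcont, ?_⟩
    -- coercivity
    have hne : (Finset.univ : Finset (Fin k)).Nonempty := ⟨⟨0, hk⟩, Finset.mem_univ _⟩
    set j0 : Fin k := ⟨0, hk⟩
    set N : ℝ := Finset.univ.sup' hne fun j => ‖Z j‖ with hN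
    have hNj : ∀ j, ‖Z j‖ ≤ N := fun j =>
      Finset.le_sup' (f := fun j => ‖Z j‖) (Finset.mem_univ j)
    have hN0 : 0 ≤ N := le_trans (norm_nonneg (Z j0)) (hNj j0)
    have hunivcard : k ≤ 2 * (Finset.univ : Finset (Fin k)).card := by
      rw [Finset.card_univ, Fintype.card_fin]; omega
    have hcoer : ∀ a : EuclideanSpace ℝ (Fin d), 3*N ≤ ‖a‖ →
        ‖a‖ - N ≤ diam (Cset Z a 0) := by
      intro a ha
      have hZnorm : ∀ j : Fin k, ‖a‖ - ‖Z j‖ ≤ ‖Z j - a‖ := by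
        intro j
        rw [norm_sub_rev]
        exact norm_sub_norm_le a (Z j)
      have hmemZ : Z j0 ∈ Cset Z a 0 := by
        refine ⟨Finset.univ, hunivcard, fun j _ => ?_⟩
        have h1 : ‖Z j - Z j0‖ ≤ ‖Z j‖ + ‖Z j0‖ := norm_sub_le _ _
        have h2 := hZnorm j
        linarith [hNj j, hNj j0]
      have hmema : a ∈ Cset Z a 0 :=
        ⟨Finset.univ, hunivcard, fun j _ => by rw [add_zero]⟩
      have hd := dist_le_diam_of_mem (isBounded_Cset hk Z a 0) hmema hmemZ
      have hda : ‖a‖ - N ≤ dist a (Z j0) := by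
        rw [dist_eq_norm]
        have := norm_sub_norm_le a (Z j0)
        linarith [hNj j0]
      linarith
    set R : ℝ := max (3*N) (N + diam (Cset Z (Z j0) 0) + 1) with hR
    have hdiamnn : 0 ≤ diam (Cset Z (Z j0) 0) := diam_nonneg
    have hR0 : 0 ≤ R := le_trans (by linarith) (le_max_left _ _)
    obtain ⟨a₀, ha₀mem, ha₀min⟩ :=
      (isCompact_closedBall (0 : EuclideanSpace ℝ (Fin d)) R).exists_isMinOn
        ⟨0, mem_closedBall_self hR0⟩ (continuous_diam_Cset hk Z).continuousOn
    refine ⟨a₀, fun a => ?_⟩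
    rw [hcompl, hcompl]
    by_cases hain : a ∈ closedBall (0 : EuclideanSpace ℝ (Fin d)) R
    · exact isMinOn_iff.mp ha₀min a hain
    · have ha : R < ‖a‖ := by
        rw [mem_closedBall, dist_zero_right, not_le] at hain
        exact hain
      have h3N : 3*N ≤ ‖a‖ := le_trans (le_max_left _ _) ha.le
      have h1 := hcoer a h3N
      have hZj0mem : Z j0 ∈ closedBall (0 : EuclideanSpace ℝ (Fin d)) R := by
        rw [mem_closedBall, dist_zero_right]
        exact le_trans (hNj j0) (le_trans (by linarith) (le_max_left _ _))
      have h2 := isMinOn_iff.mp ha₀min (Z j0) hZj0mem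
      have h3 : N + diam (Cset Z (Z j0) 0) + 1 ≤ R := le_max_right _ _
      linarith
end
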